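/- Observable progression stays inside the Boolean closure of the subformulas: let φ be an LTLf formula over P with P = P_o ⊎ P_u. If ψ belongs to the Boolean closure of sf(φ), then for every observable assignment w_o ∈ B^{P_o}, the formula component of fpObs(ψ, w_o) also belongs to the Boolean closure of sf(φ). Consequently, for every observable word σ_o ∈ (B^{P_o})^+, the formula component of fpObs(φ, σ_o) belongs to the Boolean closure of sf(φ). -/

import Mathlib

/-- LTLf formulas over atomic propositions `P`.  `next` is the weak next `X`,
`snext` is the strong next `X[!]`, `fin` is `F`, `glob` is `G`,
`untl` is `U` and `rels` is `R`. -/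
inductive LTLf (P : Type) : Type
  | tt : LTLf P
  | ff : LTLf P
  | atom : P → LTLf P
  | not : LTLf P → LTLf P
  | and : LTLf P → LTLf P → LTLf P
  | or : LTLf P → LTLf P → LTLf P
  | next : LTLf P → LTLf P
  | snext : LTLf P → LTLf P
  | fin : LTLf P → LTLf P
  | glob : LTLf P → LTLf P
  | untl : LTLf P → LTLf P → LTLf P
  | rels : LTLf P → LTLf P → LTLf P

namespace LTLf

variable {P O U : Type}

/-- Standard LTLf satisfaction `σ, i ⊨ φ` on finite traces.  A word is a list of
Boolean assignments; positions out of range never occur in the statements. -/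
def Sat (σ : List (P → Bool)) : ℕ → LTLf P → Prop
  | _, tt => True
  | _, ff => False
  | i, atom p => (σ.getD i (fun _ => false)) p = true
  | i, not φ => ¬ Sat σ i φ
  | i, and φ ψ => Sat σ i φ ∧ Sat σ i ψ
  | i, or φ ψ => Sat σ i φ ∨ Sat σ i ψ
  | i, next φ => i + 1 = σ.length ∨ Sat σ (i + 1) φ
  | i, snext φ => i + 1 < σ.length ∧ Sat σ (i + 1) φ
  | i, fin φ => ∃ j, i ≤ j ∧ j < σ.length ∧ Sat σ j φ
  | i, glob φ => ∀ j, i ≤ j → j < σ.length → Sat σ j φ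
  | i, untl φ ψ =>
      ∃ j, i ≤ j ∧ j < σ.length ∧ Sat σ j ψ ∧ ∀ k, i ≤ k → k < j → Sat σ k φ
  | i, rels φ ψ =>
      ∀ j, i ≤ j → j < σ.length → (Sat σ j ψ ∨ ∃ k, i ≤ k ∧ k < j ∧ Sat σ k φ)

/-- Boolean connectives lifted componentwise to (formula, flag) pairs. -/
def pnot (x : LTLf P × Bool) : LTLf P × Bool := (not x.1, !x.2)

def pand (x y : LTLf P × Bool) : LTLf P × Bool := (and x.1 y.1, x.2 && y.2)

def por (x y : LTLf P × Bool) : LTLf P × Bool := (or x.1 y.1, x.2 || y.2)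

/-- Formula progression: given a formula and an assignment, return the
progressed formula together with the acceptance flag. -/
def fp (w : P → Bool) : LTLf P → LTLf P × Bool
  | tt => (tt, true)
  | ff => (ff, false)
  | atom p => if w p = true then (tt, true) else (ff, false)
  | not φ => pnot (fp w φ)
  | and φ ψ => pand (fp w φ) (fp w ψ)
  | or φ ψ => por (fp w φ) (fp w ψ)
  | next φ => (φ, true)
  | snext φ => (φ, false)
  | fin φ => por (fp w φ) (fin φ, false)
  | glob φ => pand (fp w φ) (glob φ, true)
  | untl φ ψ => por (fp w ψ) (pand (fp w φ) (untl φ ψ, false))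
  | rels φ ψ => pand (fp w ψ) (por (fp w φ) (rels φ ψ, true))

/-- Progression iterated over a nonempty word `w :: ws`. -/
def fpWord (φ : LTLf P) (w : P → Bool) : List (P → Bool) → LTLf P × Bool
  | [] => fp w φ
  | w' :: ws => fpWord (fp w φ).1 w' ws

/-- Propositional (Boolean) evaluation of a formula, treating atomic
propositions and maximal temporal subformulas as Boolean variables valued
by `v`. -/
def propEval (v : LTLf P → Bool) : LTLf P → Bool
  | tt => true
  | ff => false
  | not φ => !(propEval v φ)
  | and φ ψ => propEval v φ && propEval v ψ
  | or φ ψ => propEval v φ || propEval v ψ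
  | φ => v φ

/-- Propositional equivalence `φ ∼ ψ`. -/
def propEquiv (φ ψ : LTLf P) : Prop :=
  ∀ v : LTLf P → Bool, propEval v φ = propEval v ψ

/-- The `∼`-equivalence class `[φ]_∼` of a formula. -/
def pcls (φ : LTLf P) : Set (LTLf P) := { ψ | propEquiv φ ψ }

/-- The set of subformulas of a formula. -/
def sf : LTLf P → Set (LTLf P)
  | tt => {tt}
  | ff => {ff}
  | atom p => {atom p}
  | not φ => insert (not φ) (sf φ)
  | and φ ψ => insert (and φ ψ) (sf φ ∪ sf ψ)
  | or φ ψ => insert (or φ ψ) (sf φ ∪ sf ψ)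
  | next φ => insert (next φ) (sf φ)
  | snext φ => insert (snext φ) (sf φ)
  | fin φ => insert (fin φ) (sf φ)
  | glob φ => insert (glob φ) (sf φ)
  | untl φ ψ => insert (untl φ ψ) (sf φ ∪ sf ψ)
  | rels φ ψ => insert (rels φ ψ) (sf φ ∪ sf ψ)

/-- The Boolean closure of a set of formulas: the smallest set containing
`X ∪ {tt, ff}` and closed under `¬`, `∧`, `∨`. -/
inductive BC {P : Type} (X : Set (LTLf P)) : LTLf P → Prop
  | base {φ : LTLf P} : φ ∈ X → BC X φ
  | tt' : BC X LTLf.tt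
  | ff' : BC X LTLf.ff
  | not' {φ : LTLf P} : BC X φ → BC X (LTLf.not φ)
  | and' {φ ψ : LTLf P} : BC X φ → BC X ψ → BC X (LTLf.and φ ψ)
  | or' {φ ψ : LTLf P} : BC X φ → BC X ψ → BC X (LTLf.or φ ψ)

/-- A formula which is an atomic proposition or has a temporal operator as its
outermost connective. -/
def isAtomicOrTemporal : LTLf P → Prop
  | atom _ => True
  | next _ => True
  | snext _ => True
  | fin _ => True
  | glob _ => True
  | untl _ _ => True
  | rels _ _ => True
  | _ => False

/-- Observable progression: progress with respect to an observable assignment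
`wo ∈ B^{P_o}`, taking the (componentwise) conjunction of `fp` over all full
assignments compatible with `wo` (i.e. over all assignments of the
unobservable variables `U`). -/
noncomputable def fpObs [Fintype U] [DecidableEq U] (ψ : LTLf (O ⊕ U)) (wo : O → Bool) :
    LTLf (O ⊕ U) × Bool :=
  (((Finset.univ : Finset (U → Bool)).toList.map
      (fun wu => fp (Sum.elim wo wu) ψ)).foldr pand (tt, true))

/-- Observable progression iterated over a nonempty observable word `wo :: wos`. -/
noncomputable def fpObsWord [Fintype U] [DecidableEq U] (φ : LTLf (O ⊕ U)) (wo : O → Bool) :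
    List (O → Bool) → LTLf (O ⊕ U) × Bool
  | [] => fpObs φ wo
  | w :: ws => fpObsWord (fpObs φ wo).1 w ws

/-- The run of the belief-state construction: `runB φ σo t` is the belief state
`s_t` reached after observably progressing `φ` along the first `t` letters of `σo`. -/
noncomputable def runB [Fintype U] [DecidableEq U] (φ : LTLf (O ⊕ U)) (σo : List (O → Bool)) :
    ℕ → LTLf (O ⊕ U)
  | 0 => φ
  | t + 1 => (fpObs (runB φ σo t) (σo.getD t (fun _ => false))).1

end LTLf

namespace LTLf

theorem sf_self {P : Type} (ψ : LTLf P) : ψ ∈ sf ψ := by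
  cases ψ <;> simp [sf]

theorem sf_trans {P : Type} (φ : LTLf P) :
    ∀ ψ : LTLf P, ψ ∈ sf φ → sf ψ ⊆ sf φ := by
  induction φ with
  | tt => intro ψ h; simp [sf] at h; subst h; simp [sf]
  | ff => intro ψ h; simp [sf] at h; subst h; simp [sf]
  | atom p => intro ψ h; simp [sf] at h; subst h; simp [sf]
  | not a iha =>
      intro ψ h
      rcases h with h | h
      · subst h; exact subset_rfl
      · exact (iha ψ h).trans (Set.subset_insert _ _)
  | next a iha =>
      intro ψ h
      rcases h with h | h
      · subst h; exact subset_rfl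
      · exact (iha ψ h).trans (Set.subset_insert _ _)
  | snext a iha =>
      intro ψ h
      rcases h with h | h
      · subst h; exact subset_rfl
      · exact (iha ψ h).trans (Set.subset_insert _ _)
  | fin a iha =>
      intro ψ h
      rcases h with h | h
      · subst h; exact subset_rfl
      · exact (iha ψ h).trans (Set.subset_insert _ _)
  | glob a iha =>
      intro ψ h
      rcases h with h | h
      · subst h; exact subset_rfl
      · exact (iha ψ h).trans (Set.subset_insert _ _)
  | and a b iha ihb =>
      intro ψ h
      rcases h with h | h | h
      · subst h; exact subset_rfl
      · exact (iha ψ h).trans ((Set.subset_union_left).trans (Set.subset_insert _ _))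
      · exact (ihb ψ h).trans ((Set.subset_union_right).trans (Set.subset_insert _ _))
  | or a b iha ihb =>
      intro ψ h
      rcases h with h | h | h
      · subst h; exact subset_rfl
      · exact (iha ψ h).trans ((Set.subset_union_left).trans (Set.subset_insert _ _))
      · exact (ihb ψ h).trans ((Set.subset_union_right).trans (Set.subset_insert _ _))
  | untl a b iha ihb =>
      intro ψ h
      rcases h with h | h | h
      · subst h; exact subset_rfl
      · exact (iha ψ h).trans ((Set.subset_union_left).trans (Set.subset_insert _ _))
      · exact (ihb ψ h).trans ((Set.subset_union_right).trans (Set.subset_insert _ _))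
  | rels a b iha ihb =>
      intro ψ h
      rcases h with h | h | h
      · subst h; exact subset_rfl
      · exact (iha ψ h).trans ((Set.subset_union_left).trans (Set.subset_insert _ _))
      · exact (ihb ψ h).trans ((Set.subset_union_right).trans (Set.subset_insert _ _))

theorem fp_BC_of_sf {P : Type} (φ : LTLf P) (w : P → Bool) :
    ∀ ψ : LTLf P, sf ψ ⊆ sf φ → BC (sf φ) (fp w ψ).1 := by
  intro ψ
  induction ψ with
  | tt => intro _; exact BC.tt'
  | ff => intro _; exact BC.ff'
  | atom p =>
      intro _
      simp only [fp]
      split <;> [exact BC.tt'; exact BC.ff']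
  | not a iha =>
      intro h
      exact BC.not' (iha (fun x hx => h (by simp [sf]; exact Or.inr hx)))
  | and a b iha ihb =>
      intro h
      exact BC.and' (iha (fun x hx => h (by simp [sf]; tauto)))
        (ihb (fun x hx => h (by simp [sf]; tauto)))
  | or a b iha ihb =>
      intro h
      exact BC.or' (iha (fun x hx => h (by simp [sf]; tauto)))
        (ihb (fun x hx => h (by simp [sf]; tauto)))
  | next a iha =>
      intro h
      exact BC.base (h (by simp [sf]; exact Or.inr (sf_self a)))
  | snext a iha =>
      intro h
      exact BC.base (h (by simp [sf]; exact Or.inr (sf_self a)))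
  | fin a iha =>
      intro h
      exact BC.or' (iha (fun x hx => h (by simp [sf]; exact Or.inr hx)))
        (BC.base (h (by simp [sf])))
  | glob a iha =>
      intro h
      exact BC.and' (iha (fun x hx => h (by simp [sf]; exact Or.inr hx)))
        (BC.base (h (by simp [sf])))
  | untl a b iha ihb =>
      intro h
      exact BC.or' (ihb (fun x hx => h (by simp [sf]; tauto)))
        (BC.and' (iha (fun x hx => h (by simp [sf]; tauto)))
          (BC.base (h (by simp [sf]))))
  | rels a b iha ihb =>
      intro h
      exact BC.and' (ihb (fun x hx => h (by simp [sf]; tauto)))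
        (BC.or' (iha (fun x hx => h (by simp [sf]; tauto)))
          (BC.base (h (by simp [sf]))))

theorem fp_BC {P : Type} (φ : LTLf P) (w : P → Bool) :
    ∀ ψ : LTLf P, BC (sf φ) ψ → BC (sf φ) (fp w ψ).1 := by
  intro ψ h
  induction h with
  | base hmem => exact fp_BC_of_sf φ w _ (sf_trans φ _ hmem)
  | tt' => exact BC.tt'
  | ff' => exact BC.ff'
  | not' _ ih => exact BC.not' ih
  | and' _ _ ih1 ih2 => exact BC.and' ih1 ih2
  | or' _ _ ih1 ih2 => exact BC.or' ih1 ih2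

theorem foldr_pand_BC {P : Type} (X : Set (LTLf P)) (l : List (LTLf P × Bool))
    (h : ∀ x ∈ l, BC X x.1) : BC X ((l.foldr pand (tt, true)).1) := by
  induction l with
  | nil => exact BC.tt'
  | cons a l ih =>
      exact BC.and' (h a List.mem_cons_self) (ih fun x hx => h x (List.mem_cons_of_mem _ hx))

theorem fpObs_BC {O U : Type} [Fintype U] [DecidableEq U] (φ : LTLf (O ⊕ U))
    (ψ : LTLf (O ⊕ U)) (h : BC (sf φ) ψ) (wo : O → Bool) :
    BC (sf φ) (fpObs ψ wo).1 := by
  unfold fpObs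
  apply foldr_pand_BC
  intro x hx
  simp only [List.mem_map] at hx
  obtain ⟨wu, _, rfl⟩ := hx
  exact fp_BC φ _ ψ h

end LTLf

/-- observable progression stays inside the Boolean closure of
the subformulas of `φ`. -/
theorem fpObs_mem_booleanClosure {O U : Type} [Fintype O] [DecidableEq O]
    [Fintype U] [DecidableEq U] (φ : LTLf (O ⊕ U)) :
    (∀ ψ : LTLf (O ⊕ U), LTLf.BC (LTLf.sf φ) ψ →
        ∀ wo : O → Bool, LTLf.BC (LTLf.sf φ) (LTLf.fpObs ψ wo).1) ∧
      (∀ (wo : O → Bool) (wos : List (O → Bool)),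
        LTLf.BC (LTLf.sf φ) (LTLf.fpObsWord φ wo wos).1) := by
  constructor
  · exact fun ψ h wo => LTLf.fpObs_BC φ ψ h wo
  · intro wo wos
    have key : ∀ (wos : List (O → Bool)) (ψ : LTLf (O ⊕ U)), LTLf.BC (LTLf.sf φ) ψ →
        ∀ wo, LTLf.BC (LTLf.sf φ) (LTLf.fpObsWord ψ wo wos).1 := by
      intro wos
      induction wos with
      | nil => exact fun ψ h wo => LTLf.fpObs_BC φ ψ h wo
      | cons w ws ih =>
          intro ψ h wo
          exact ih _ (LTLf.fpObs_BC φ ψ h wo) w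
    exact key wos φ (LTLf.BC.base (LTLf.sf_self φ)) wo
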